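/- If M₂ is nilpotent with M₂^k = 0 and M₁ is invertible, then the unique solution of M₁·E + E·M₂ = F is given by the finite sum E = Σ_{j=0}^{k−1} (−1)^j · M₁^{−(j+1)} · F · M₂^j. -/

import Mathlib

/-- If `M₂^k = 0` and `M₁` is invertible, the unique solution of `M₁·E + E·M₂ = F`
is `E = Σ_{j=0}^{k−1} (−1)^j · M₁^{−(j+1)} · F · M₂^j`. -/
theorem sylvester_nilpotent_solution {K : Type*} [Field K] {m n k : ℕ}
    (M₁ : Matrix (Fin m) (Fin m) K) (hM₁ : IsUnit M₁)
    (M₂ : Matrix (Fin n) (Fin n) K) (hM₂ : M₂ ^ k = 0)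
    (F : Matrix (Fin m) (Fin n) K) :
    (M₁ * (∑ j ∈ Finset.range k, (-1 : K) ^ j • (M₁⁻¹ ^ (j + 1) * F * M₂ ^ j)) +
      (∑ j ∈ Finset.range k, (-1 : K) ^ j • (M₁⁻¹ ^ (j + 1) * F * M₂ ^ j)) * M₂ = F) ∧
    (∀ E : Matrix (Fin m) (Fin n) K, M₁ * E + E * M₂ = F →
      E = ∑ j ∈ Finset.range k, (-1 : K) ^ j • (M₁⁻¹ ^ (j + 1) * F * M₂ ^ j)) := by
  have hunit : IsUnit M₁.det := (Matrix.isUnit_iff_isUnit_det M₁).mp hM₁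
  have hinv : M₁⁻¹ * M₁ = 1 := Matrix.nonsing_inv_mul M₁ hunit
  have hinv' : M₁ * M₁⁻¹ = 1 := Matrix.mul_nonsing_inv M₁ hunit
  set a : ℕ → Matrix (Fin m) (Fin n) K :=
    fun j => (-1 : K) ^ j • (M₁⁻¹ ^ j * F * M₂ ^ j) with ha
  have key : ∀ j, M₁ * ((-1 : K) ^ j • (M₁⁻¹ ^ (j + 1) * F * M₂ ^ j)) = a j := by
    intro j
    rw [Matrix.mul_smul, ha]
    congr 1
    rw [pow_succ', ← Matrix.mul_assoc, ← Matrix.mul_assoc, ← Matrix.mul_assoc, hinv',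
      Matrix.one_mul]
  have hsub : ∀ j, ((-1 : K) ^ j • (M₁⁻¹ ^ (j + 1) * F * M₂ ^ j)) * M₂ = -a (j + 1) := by
    intro j
    rw [Matrix.smul_mul, ha]
    simp only [pow_succ (-1 : K), mul_neg_one, neg_smul, neg_neg]
    congr 1
    rw [pow_succ M₂, ← Matrix.mul_assoc]
  have hexist : M₁ * (∑ j ∈ Finset.range k, (-1 : K) ^ j • (M₁⁻¹ ^ (j + 1) * F * M₂ ^ j)) +
      (∑ j ∈ Finset.range k, (-1 : K) ^ j • (M₁⁻¹ ^ (j + 1) * F * M₂ ^ j)) * M₂ = F := by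
    rw [Matrix.mul_sum, Matrix.sum_mul,
      Finset.sum_congr rfl (fun j (_ : j ∈ Finset.range k) => key j),
      Finset.sum_congr rfl (fun j (_ : j ∈ Finset.range k) => hsub j)]
    have : ∑ j ∈ Finset.range k, -a (j + 1) = -∑ j ∈ Finset.range k, a (j + 1) :=
      Finset.sum_neg_distrib _
    rw [this, ← sub_eq_add_neg, ← Finset.sum_sub_distrib, Finset.sum_range_sub' a k, ha]
    simp [hM₂]
  refine ⟨hexist, fun E hE => ?_⟩
  have hME : M₁ * E = F - E * M₂ := eq_sub_of_add_eq hE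
  have hEeq : E = M₁⁻¹ * F - M₁⁻¹ * (E * M₂) := by
    calc E = 1 * E := (Matrix.one_mul E).symm
    _ = (M₁⁻¹ * M₁) * E := by rw [hinv]
    _ = M₁⁻¹ * (M₁ * E) := Matrix.mul_assoc _ _ _
    _ = M₁⁻¹ * (F - E * M₂) := by rw [hME]
    _ = M₁⁻¹ * F - M₁⁻¹ * (E * M₂) := Matrix.mul_sub _ _ _
  have step : ∀ t, (-1 : K) ^ t • (M₁⁻¹ ^ t * E * M₂ ^ t)
      = (-1 : K) ^ t • (M₁⁻¹ ^ (t + 1) * F * M₂ ^ t)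
        + (-1 : K) ^ (t + 1) • (M₁⁻¹ ^ (t + 1) * E * M₂ ^ (t + 1)) := by
    intro t
    have hneg : (-1 : K) ^ (t + 1) • (M₁⁻¹ ^ (t + 1) * E * M₂ ^ (t + 1))
        = -((-1 : K) ^ t • (M₁⁻¹ ^ (t + 1) * E * M₂ ^ (t + 1))) := by
      rw [pow_succ, mul_neg_one, neg_smul]
    rw [hneg, ← sub_eq_add_neg]
    conv_lhs => rw [hEeq]
    rw [Matrix.mul_sub, Matrix.sub_mul, smul_sub]
    congr 2
    · simp [pow_succ, Matrix.mul_assoc]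
    · simp only [Matrix.mul_assoc, ← pow_succ, ← pow_succ']
      rw [pow_succ M₁⁻¹, Matrix.mul_assoc]
  have main : ∀ t, E = (∑ j ∈ Finset.range t, (-1 : K) ^ j • (M₁⁻¹ ^ (j + 1) * F * M₂ ^ j))
      + (-1 : K) ^ t • (M₁⁻¹ ^ t * E * M₂ ^ t) := by
    intro t
    induction t with
    | zero => simp
    | succ t ih => rw [Finset.sum_range_succ, add_assoc, ← step t]; exact ih
  have := main k
  rw [hM₂] at this
  simpa using this
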